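/- The map sending each subset J ⊆ {1,…,n} to the extended quota majority method φ_{(k_0,…,k_{r-1}, n+1)}, where r = |J| and the entries k_{r-1}, k_{r-2}, … are chosen alternately as min and max of the remaining elements of J (k_{r-1} = min J, k_{r-2} = max of J minus {k_{r-1}}, k_{r-3} = min of the rest, etc.), with the empty set mapped to the constant function b, produces a proper tuple for every J (i.e., the resulting tuple satisfies the alternating up-down condition around k_0 and ends with n+1). -/

import Mathlib

/-- Number of voters preferring alternative `a`. -/
def countA (n : ℕ) (P : Fin n → Option Bool) : ℕ :=
  (Finset.univ.filter fun v => P v = some true).card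

/-- Number of voters preferring alternative `b`. -/
def countB (n : ℕ) (P : Fin n → Option Bool) : ℕ :=
  (Finset.univ.filter fun v => P v = some false).card

/-- The defining condition at quota `k`: at least `k` voters prefer `a`
or at least `n + 1 - k` voters prefer `b`. -/
def hits (n : ℕ) (P : Fin n → Option Bool) (k : ℕ) : Bool :=
  decide (k ≤ countA n P ∨ n + 1 - k ≤ countB n P)

/-- The (generalized) extended quota majority method attached to a list of quotas:
find the least index whose quota condition holds, and output `true` (= a) iff the
a-branch of that condition holds. -/
def phi (n : ℕ) (l : List ℕ) (P : Fin n → Option Bool) : Bool :=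
  decide (l.getD (l.findIdx (hits n P)) (n + 1) ≤ countA n P)

/-- A valid tuple for an extended quota majority method: nonempty, distinct entries
from `{0, …, n+1}`, last entry in `{0, n+1}`. -/
def Valid (n : ℕ) (l : List ℕ) : Prop :=
  l ≠ [] ∧ l.Nodup ∧ (∀ x ∈ l, x ≤ n + 1) ∧
    (l.getLast? = some 0 ∨ l.getLast? = some (n + 1))

/-- A tuple `(k_0, k_1, …, k_t)` is proper: at least two entries, distinct entries
from `{0, …, n+1}`, last entry in `{0, n+1}`, any two consecutive entries of the
tail `k_1, k_2, …` lie strictly on opposite sides of `k_0`, and along each side the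
entries become strictly more extreme. -/
def Proper (n : ℕ) (l : List ℕ) : Prop :=
  2 ≤ l.length ∧ l.Nodup ∧ (∀ x ∈ l, x ≤ n + 1) ∧
  (l.getLast? = some 0 ∨ l.getLast? = some (n + 1)) ∧
  (∀ i, i + 2 < l.length →
    (l.getD (i + 1) 0 < l.getD 0 0 ∧ l.getD 0 0 < l.getD (i + 2) 0) ∨
    (l.getD (i + 2) 0 < l.getD 0 0 ∧ l.getD 0 0 < l.getD (i + 1) 0)) ∧
  (∀ i, i + 3 < l.length →
    (l.getD (i + 1) 0 < l.getD 0 0 → l.getD (i + 3) 0 < l.getD (i + 1) 0) ∧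
    (l.getD 0 0 < l.getD (i + 1) 0 → l.getD (i + 1) 0 < l.getD (i + 3) 0))

/-- Alternating min/max peeling of a finite set of naturals, with fuel:
`peelAux fuel true s` lists `min s`, then `max` of the rest, then `min` of the
rest, and so on. -/
def peelAux : ℕ → Bool → Finset ℕ → List ℕ
  | 0, _, _ => []
  | m + 1, b, s =>
    if h : s.Nonempty then
      (if b then s.min' h else s.max' h) ::
        peelAux m (!b) (s.erase (if b then s.min' h else s.max' h))
    else []

/-- `peel b s` peels off alternately the min (if `b`) and max of `s`. -/
def peel (b : Bool) (s : Finset ℕ) : List ℕ := peelAux s.card b s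

def AltB : Bool → List ℕ → Prop
  | _, [] => True
  | b, x :: xs => (∀ y ∈ xs, if b = true then x < y else y < x) ∧ AltB (!b) xs

lemma peelAux_subset : ∀ (m : ℕ) (b : Bool) (s : Finset ℕ), ∀ x ∈ peelAux m b s, x ∈ s := by
  intro m
  induction m with
  | zero => intro b s x hx; simp [peelAux] at hx
  | succ m ih =>
    intro b s x hx
    rw [peelAux] at hx
    split at hx
    · rename_i h
      have hm : (if b then s.min' h else s.max' h) ∈ s := by
        split
        · exact s.min'_mem h
        · exact s.max'_mem h
      rcases List.mem_cons.mp hx with rfl | hx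
      · exact hm
      · exact Finset.mem_of_mem_erase (ih _ _ x hx)
    · simp at hx

lemma peelAux_length : ∀ (m : ℕ) (b : Bool) (s : Finset ℕ), m ≤ s.card →
    (peelAux m b s).length = m := by
  intro m
  induction m with
  | zero => intro b s _; simp [peelAux]
  | succ m ih =>
    intro b s hm
    have h : s.Nonempty := Finset.card_pos.mp (by omega)
    rw [peelAux, dif_pos h]
    have hmem : (if b then s.min' h else s.max' h) ∈ s := by
      split
      · exact s.min'_mem h
      · exact s.max'_mem h
    have := Finset.card_erase_of_mem hmem
    simp only [List.length_cons]
    rw [ih _ _ (by omega)]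

lemma peelAux_nodup : ∀ (m : ℕ) (b : Bool) (s : Finset ℕ), (peelAux m b s).Nodup := by
  intro m
  induction m with
  | zero => intro b s; simp [peelAux]
  | succ m ih =>
    intro b s
    rw [peelAux]
    split
    · rename_i h
      refine List.nodup_cons.mpr ⟨?_, ih _ _⟩
      intro hmem
      have := peelAux_subset _ _ _ _ hmem
      exact (Finset.ne_of_mem_erase this) rfl
    · simp

lemma peelAux_altB : ∀ (m : ℕ) (b : Bool) (s : Finset ℕ), AltB b (peelAux m b s) := by
  intro m
  induction m with
  | zero => intro b s; simp [peelAux, AltB]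
  | succ m ih =>
    intro b s
    rw [peelAux]
    split
    · rename_i h
      refine ⟨?_, ih _ _⟩
      intro y hy
      have hy' := peelAux_subset _ _ _ _ hy
      have hne := Finset.ne_of_mem_erase hy'
      have hmem := Finset.mem_of_mem_erase hy'
      cases b with
      | true =>
        simp only [if_pos rfl, if_true] at *
        exact lt_of_le_of_ne (s.min'_le y hmem) (Ne.symm hne)
      | false =>
        simp only [Bool.false_eq_true, if_false] at *
        exact lt_of_le_of_ne (s.le_max' y hmem) hne
    · simp [AltB]

lemma altB_getD {b : Bool} {l : List ℕ} (h : AltB b l) :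
    ∀ i j, i < j → j < l.length →
      ((Even i ↔ b = true) → l.getD i 0 < l.getD j 0) ∧
      (¬(Even i ↔ b = true) → l.getD j 0 < l.getD i 0) := by
  induction l generalizing b with
  | nil => intro i j _ hj; simp at hj
  | cons x xs ih =>
    intro i j hij hj
    obtain ⟨h1, h2⟩ := h
    cases i with
    | zero =>
      obtain ⟨j', rfl⟩ : ∃ j', j = j' + 1 := ⟨j - 1, by omega⟩
      have hj' : j' < xs.length := by simpa using hj
      have hy : xs.getD j' 0 ∈ xs := by
        rw [List.getD_eq_getElem _ _ hj']; exact List.getElem_mem hj'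
      have := h1 _ hy
      constructor
      · intro hb
        have hb' : b = true := by simpa using hb
        simp only [hb', if_true] at this
        simpa using this
      · intro hb
        have hb' : b = false := by
          cases b
          · rfl
          · simp at hb
        simp only [hb'] at this
        simp at this
        simpa using this
    | succ i' =>
      obtain ⟨j', rfl⟩ : ∃ j', j = j' + 1 := ⟨j - 1, by omega⟩
      have hj' : j' < xs.length := by simpa using hj
      have := ih (b := !b) h2 i' j' (by omega) hj'
      simp only [List.getD_cons_succ]
      have hpar : (Even i' ↔ (!b) = true) ↔ (Even (i' + 1) ↔ b = true) := by
        cases b <;> simp [Nat.even_add_one]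
      constructor
      · intro hb
        exact this.1 (hpar.mpr hb)
      · intro hb
        exact this.2 (fun hc => hb (hpar.mp hc))

/-- for every nonempty `J ⊆ {1, …, n}`, the tuple
`(k_0, …, k_{r-1}, n+1)` obtained by assigning `k_{r-1} = min J`,
`k_{r-2} = max` of the rest, alternating, is a proper tuple. (`peel true J` lists
`k_{r-1}, k_{r-2}, …, k_0`, so the tuple is its reverse followed by `n+1`.) -/
theorem stmt_14 (n : ℕ) (hn : 1 ≤ n) (J : Finset ℕ)
    (hJ : J ⊆ Finset.Icc 1 n) (hne : J.Nonempty) :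
    Proper n ((peel true J).reverse ++ [n + 1]) := by
  classical
  set p : List ℕ := peel true J with hpdef
  have hlen : p.length = J.card := peelAux_length J.card true J le_rfl
  have hsub : ∀ x ∈ p, x ∈ J := peelAux_subset J.card true J
  have hnodup : p.Nodup := peelAux_nodup J.card true J
  have halt := altB_getD (peelAux_altB J.card true J)
  set r := p.length with hrdef
  have hr1 : 1 ≤ r := by
    have := Finset.card_pos.mpr hne
    omega
  have hbound : ∀ k, k < r → 1 ≤ p.getD k 0 ∧ p.getD k 0 ≤ n := by
    intro k hk
    have hmem : p.getD k 0 ∈ p := by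
      rw [List.getD_eq_getElem _ _ hk]; exact List.getElem_mem hk
    have := hJ (hsub _ hmem)
    simpa [Finset.mem_Icc] using this
  have key : ∀ i j, i < j → j < r →
      (Even i → p.getD i 0 < p.getD j 0) ∧ (¬ Even i → p.getD j 0 < p.getD i 0) := by
    intro i j hij hj
    have := halt i j hij hj
    constructor
    · intro he; exact this.1 (by simpa using he)
    · intro he; exact this.2 (by simpa using he)
  set l : List ℕ := p.reverse ++ [n + 1] with hldef
  have hlen' : l.length = r + 1 := by simp [hldef]; exact hrdef.symm
  have hget : ∀ i, i < r → l.getD i 0 = p.getD (r - 1 - i) 0 := by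
    intro i hi
    rw [hldef, List.getD_append _ _ _ _ (by simpa using hi)]
    rw [List.getD_eq_getElem _ _ (by simpa using hi), List.getD_eq_getElem _ _ (by omega)]
    exact List.getElem_reverse _
  have hgetr : l.getD r 0 = n + 1 := by
    rw [hldef, List.getD_append_right _ _ _ _ (by simpa using le_rfl)]
    simp [← hrdef]
  refine ⟨by omega, ?_, ?_, ?_, ?_, ?_⟩
  · rw [hldef, List.nodup_append]
    refine ⟨List.nodup_reverse.mpr hnodup, List.nodup_singleton _, ?_⟩
    intro a ha hb
    have ha' : a ∈ p := List.mem_reverse.mp ha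
    have h1 := hJ (hsub _ ha')
    rw [Finset.mem_Icc] at h1
    intro hbm
    simp only [List.mem_singleton] at hbm
    omega
  · intro x hx
    rw [hldef, List.mem_append] at hx
    rcases hx with hx | hx
    · have h1 := hJ (hsub _ (List.mem_reverse.mp hx))
      rw [Finset.mem_Icc] at h1
      omega
    · simp only [List.mem_singleton] at hx
      omega
  · right
    rw [hldef]
    exact List.getLast?_concat
  · intro i hi
    rw [hlen'] at hi
    have h0 : l.getD 0 0 = p.getD (r - 1) 0 := by simpa using hget 0 (by omega)
    have h1 : l.getD (i + 1) 0 = p.getD (r - 2 - i) 0 := by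
      rw [hget (i + 1) (by omega)]; congr 1; omega
    by_cases hcase : i + 2 = r
    · have h2 : l.getD (i + 2) 0 = n + 1 := by rw [hcase]; exact hgetr
      have hk0 : r - 2 - i = 0 := by omega
      rw [h0, h1, h2, hk0]
      left
      refine ⟨(key 0 (r - 1) (by omega) (by omega)).1 (by simp), ?_⟩
      have := (hbound (r - 1) (by omega)).2
      omega
    · have h2 : l.getD (i + 2) 0 = p.getD (r - 3 - i) 0 := by
        rw [hget (i + 2) (by omega)]; congr 1; omega
      rw [h0, h1, h2]
      have heq : r - 2 - i = (r - 3 - i) + 1 := by omega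
      by_cases hev : Even (r - 3 - i)
      · right
        refine ⟨(key (r - 3 - i) (r - 1) (by omega) (by omega)).1 hev, ?_⟩
        refine (key (r - 2 - i) (r - 1) (by omega) (by omega)).2 ?_
        rw [heq]
        simp [Nat.even_add_one, hev]
      · left
        refine ⟨(key (r - 2 - i) (r - 1) (by omega) (by omega)).1 ?_,
                (key (r - 3 - i) (r - 1) (by omega) (by omega)).2 hev⟩
        rw [heq]
        simp [Nat.even_add_one, hev]
  · intro i hi
    rw [hlen'] at hi
    have h0 : l.getD 0 0 = p.getD (r - 1) 0 := by simpa using hget 0 (by omega)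
    have h1 : l.getD (i + 1) 0 = p.getD (r - 2 - i) 0 := by
      rw [hget (i + 1) (by omega)]; congr 1; omega
    by_cases hcase : i + 3 = r
    · have hk1 : r - 2 - i = 1 := by omega
      have hgt : p.getD (r - 1) 0 < p.getD 1 0 :=
        (key 1 (r - 1) (by omega) (by omega)).2 (by decide)
      rw [h0, h1, hk1, hcase, hgetr]
      constructor
      · intro hlt; omega
      · intro _
        have := (hbound 1 (by omega)).2
        omega
    · have h3 : l.getD (i + 3) 0 = p.getD (r - 4 - i) 0 := by
        rw [hget (i + 3) (by omega)]; congr 1; omega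
      rw [h0, h1, h3]
      have heq : r - 2 - i = (r - 4 - i) + 1 + 1 := by omega
      by_cases hev : Even (r - 2 - i)
      · have hev3 : Even (r - 4 - i) := by
          rw [heq] at hev
          simpa [Nat.even_add_one, parity_simps] using hev
        have hA : p.getD (r - 2 - i) 0 < p.getD (r - 1) 0 :=
          (key (r - 2 - i) (r - 1) (by omega) (by omega)).1 hev
        have hB : p.getD (r - 4 - i) 0 < p.getD (r - 2 - i) 0 :=
          (key (r - 4 - i) (r - 2 - i) (by omega) (by omega)).1 hev3
        exact ⟨fun _ => hB, fun h => absurd h (by omega)⟩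
      · have hev3 : ¬ Even (r - 4 - i) := by
          rw [heq] at hev
          simpa [Nat.even_add_one, parity_simps] using hev
        have hA : p.getD (r - 1) 0 < p.getD (r - 2 - i) 0 :=
          (key (r - 2 - i) (r - 1) (by omega) (by omega)).2 hev
        have hB : p.getD (r - 2 - i) 0 < p.getD (r - 4 - i) 0 :=
          (key (r - 4 - i) (r - 2 - i) (by omega) (by omega)).2 hev3
        exact ⟨fun h => absurd h (by omega), fun _ => hB⟩
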